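/- arXiv:1101.0333 — 8 statements merged into one kernel-verified Lean document; each statement's English description precedes it below -/
import Mathlib

section
/- Let E be a finite partially ordered set and P a stochastic matrix on E. Then P is ↑-weakly monotone if and only if P preserves the class F, i.e., for every f ∈ F the function e ↦ Σ_{e'∈E} P(e,e') f(e') also belongs to F. -/
open Finset Matrix

/-- `P` is a stochastic matrix: nonnegative entries, rows summing to 1. -/
def IsStochastic {E : Type*} [Fintype E] (P : Matrix E E ℝ) : Prop :=
  (∀ e e', 0 ≤ P e e') ∧ ∀ e, ∑ e', P e e' = 1

/-- `π` is a probability vector. -/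
def IsProbVec {E : Type*} [Fintype E] (π : E → ℝ) : Prop :=
  (∀ e, 0 ≤ π e) ∧ ∑ e, π e = 1

/-- `π₁ ≼↑ π₂` : `π₁({e}↑) ≤ π₂({e}↑)` for every `e`. -/
def UpLE {E : Type*} [Fintype E] [PartialOrder E]
    [DecidableRel ((· ≤ ·) : E → E → Prop)] (π₁ π₂ : E → ℝ) : Prop :=
  ∀ e, ∑ e' ∈ univ.filter (fun e' => e ≤ e'), π₁ e'
      ≤ ∑ e' ∈ univ.filter (fun e' => e ≤ e'), π₂ e'

/-- The class `F` of functions `f` with `∫ f dπ₁ ≤ ∫ f dπ₂` whenever `π₁ ≼↑ π₂`. -/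
def InClassF {E : Type*} [Fintype E] [PartialOrder E]
    [DecidableRel ((· ≤ ·) : E → E → Prop)] (f : E → ℝ) : Prop :=
  ∀ π₁ π₂ : E → ℝ, IsProbVec π₁ → IsProbVec π₂ → UpLE π₁ π₂ →
    ∑ e, π₁ e * f e ≤ ∑ e, π₂ e * f e

lemma probVec_mul {E : Type*} [Fintype E] (P : Matrix E E ℝ) (hP : IsStochastic P)
    (π : E → ℝ) (hπ : IsProbVec π) : IsProbVec (fun e' => ∑ e, π e * P e e') := by
  constructor
  · intro e'
    exact Finset.sum_nonneg fun e _ => mul_nonneg (hπ.1 e) (hP.1 e e')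
  · rw [Finset.sum_comm]
    simp_rw [← Finset.mul_sum, hP.2, mul_one, hπ.2]

lemma sum_swap_lemma {E : Type*} [Fintype E] (P : Matrix E E ℝ) (π f : E → ℝ) :
    ∑ e, π e * ∑ e', P e e' * f e' = ∑ e', (∑ e, π e * P e e') * f e' := by
  simp_rw [Finset.mul_sum, Finset.sum_mul]
  rw [Finset.sum_comm]
  simp_rw [mul_assoc]

/-- `P` is ↑-weakly monotone iff `P` preserves the class `F`. -/
theorem stmt0 {E : Type*} [Fintype E] [PartialOrder E]
    [DecidableRel ((· ≤ ·) : E → E → Prop)]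
    (P : Matrix E E ℝ) (hP : IsStochastic P) :
    (∀ π₁ π₂ : E → ℝ, IsProbVec π₁ → IsProbVec π₂ → UpLE π₁ π₂ →
        UpLE (fun e' => ∑ e, π₁ e * P e e') (fun e' => ∑ e, π₂ e * P e e'))
    ↔ (∀ f : E → ℝ, InClassF f → InClassF (fun e => ∑ e', P e e' * f e')) := by
  constructor
  · intro hmono f hf π₁ π₂ h₁ h₂ hle
    calc ∑ e, π₁ e * ∑ e', P e e' * f e'
        = ∑ e', (∑ e, π₁ e * P e e') * f e' := sum_swap_lemma P π₁ f
      _ ≤ ∑ e', (∑ e, π₂ e * P e e') * f e' :=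
          hf _ _ (probVec_mul P hP π₁ h₁) (probVec_mul P hP π₂ h₂)
            (hmono π₁ π₂ h₁ h₂ hle)
      _ = ∑ e, π₂ e * ∑ e', P e e' * f e' := (sum_swap_lemma P π₂ f).symm
  · intro hpres π₁ π₂ h₁ h₂ hle e
    set f : E → ℝ := fun e' => if e ≤ e' then 1 else 0 with hfdef
    have hfF : InClassF f := by
      intro ρ₁ ρ₂ hρ₁ hρ₂ hρ
      have key : ∀ ρ : E → ℝ, ∑ e'', ρ e'' * f e''
          = ∑ e' ∈ univ.filter (fun e' => e ≤ e'), ρ e' := by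
        intro ρ
        rw [Finset.sum_filter]
        apply Finset.sum_congr rfl
        intro x _
        simp only [hfdef]
        split <;> simp
      rw [key ρ₁, key ρ₂]
      exact hρ e
    have h := hpres f hfF π₁ π₂ h₁ h₂ hle
    have key2 : ∀ ρ : E → ℝ, ∑ e'', ρ e'' * ∑ e', P e'' e' * f e'
        = ∑ e' ∈ univ.filter (fun e' => e ≤ e'), ∑ e'', ρ e'' * P e'' e' := by
      intro ρ
      rw [sum_swap_lemma P ρ f, Finset.sum_filter]
      apply Finset.sum_congr rfl
      intro x _
      simp only [hfdef]
      split <;> simp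
    rw [key2 π₁, key2 π₂] at h
    exact h
end

section
/- Let E be a finite partially ordered set and P a stochastic matrix on E. If P is ↑-Möbius monotone then P is ↑-weakly monotone. -/
open Finset Matrix

/-- The zeta matrix of a finite poset: `C(e,e') = 1` if `e ≤ e'`, else `0`.
Its matrix inverse is the Möbius function of the poset. -/
noncomputable def zeta (E : Type*) [Fintype E] [PartialOrder E]
    [DecidableRel ((· ≤ ·) : E → E → Prop)] : Matrix E E ℝ :=
  Matrix.of fun e e' => if e ≤ e' then 1 else 0

/-- The determinant of the zeta matrix is 1. -/
lemma zeta_det_one (E : Type*) [Fintype E] [DecidableEq E] [PartialOrder E]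
    [DecidableRel ((· ≤ ·) : E → E → Prop)] : (zeta E).det = 1 := by
  classical
  letI : Fintype (LinearExtension E) := ‹Fintype E›
  let σ : LinearExtension E ≃o Fin (Fintype.card (LinearExtension E)) :=
    (monoEquivOfFin _ rfl).symm
  let ε : E ≃ Fin (Fintype.card (LinearExtension E)) := σ.toEquiv
  have hmono : ∀ {a b : E}, a ≤ b → ε a ≤ ε b := by
    intro a b hab
    exact σ.le_iff_le.mpr (toLinearExtension.monotone hab)
  have hdet : ((zeta E).submatrix ε.symm ε.symm).det = (zeta E).det :=
    Matrix.det_submatrix_equiv_self ε.symm (zeta E)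
  rw [← hdet]
  rw [Matrix.det_of_upperTriangular]
  · apply Finset.prod_eq_one
    intro i _
    simp [zeta, Matrix.submatrix_apply]
  · intro i j hji
    simp only [id] at hji
    simp only [Matrix.submatrix_apply, zeta, Matrix.of_apply]
    rw [if_neg]
    intro hle
    have := hmono hle
    simp only [Equiv.apply_symm_apply] at this
    exact absurd (lt_of_lt_of_le hji this) (lt_irrefl _)

/-- if `P` is ↑-Möbius monotone (every entry of `(Cᵀ)⁻¹ P Cᵀ` is
nonnegative) then `P` is ↑-weakly monotone. -/
theorem stmt1 {E : Type*} [Fintype E] [DecidableEq E] [PartialOrder E]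
    [DecidableRel ((· ≤ ·) : E → E → Prop)]
    (P : Matrix E E ℝ) (hP : IsStochastic P)
    (hMob : ∀ e e', 0 ≤ ((((zeta E)ᵀ)⁻¹ * P * (zeta E)ᵀ)) e e') :
    ∀ π₁ π₂ : E → ℝ, IsProbVec π₁ → IsProbVec π₂ → UpLE π₁ π₂ →
      UpLE (π₁ ᵥ* P) (π₂ ᵥ* P) := by
  intro π₁ π₂ _ _ hle
  set C : Matrix E E ℝ := (zeta E)ᵀ with hC
  have hdet : IsUnit C.det := by
    rw [hC, Matrix.det_transpose, zeta_det_one]; exact isUnit_one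
  set M : Matrix E E ℝ := C⁻¹ * P * C with hM
  have hPC : P * C = C * M := by
    rw [hM, ← Matrix.mul_assoc, ← Matrix.mul_assoc,
      Matrix.mul_nonsing_inv _ hdet, Matrix.one_mul]
  -- key: for any vector v, (v ᵥ* C) e = ∑_{e ≤ e'} v e'
  have hvC : ∀ (v : E → ℝ) (e : E),
      (v ᵥ* C) e = ∑ e' ∈ univ.filter (fun e' => e ≤ e'), v e' := by
    intro v e
    rw [Finset.sum_filter]
    simp only [Matrix.vecMul, dotProduct, hC, Matrix.transpose_apply,
      zeta, Matrix.of_apply]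
    exact Finset.sum_congr rfl fun x _ => by split <;> ring
  intro e
  have h1 : ∀ (π : E → ℝ), ((π ᵥ* P) ᵥ* C) = (π ᵥ* C) ᵥ* M := by
    intro π
    rw [Matrix.vecMul_vecMul, hPC, ← Matrix.vecMul_vecMul]
  rw [← hvC (π₁ ᵥ* P) e, ← hvC (π₂ ᵥ* P) e, h1, h1]
  simp only [Matrix.vecMul, dotProduct]
  apply Finset.sum_le_sum
  intro x _
  have hx : (π₁ ᵥ* C) x ≤ (π₂ ᵥ* C) x := by
    rw [hvC, hvC]; exact hle x
  have hMx : 0 ≤ M x e := hMob x e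
  exact mul_le_mul_of_nonneg_right hx hMx
end

section
/- Let E be a finite partially ordered set and P a stochastic matrix on E. If P is ↓-Möbius monotone then P is ↓-weakly monotone. -/
open Finset Matrix

/-- `π₁ ≼↓ π₂` : `π₁({e}↓) ≤ π₂({e}↓)` for every `e`. -/
def DownLE {E : Type*} [Fintype E] [PartialOrder E]
    [DecidableRel ((· ≤ ·) : E → E → Prop)] (π₁ π₂ : E → ℝ) : Prop :=
  ∀ e, ∑ e' ∈ univ.filter (fun e' => e' ≤ e), π₁ e'
      ≤ ∑ e' ∈ univ.filter (fun e' => e' ≤ e), π₂ e'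

/-- The zeta matrix has a left inverse given by the Möbius function, hence unit determinant. -/
lemma zeta_isUnit_det (E : Type*) [Fintype E] [DecidableEq E] [PartialOrder E]
    [DecidableRel ((· ≤ ·) : E → E → Prop)] : IsUnit (zeta E).det := by
  letI : DecidableRel ((· < ·) : E → E → Prop) :=
    fun a b => decidable_of_iff (a ≤ b ∧ ¬ b ≤ a) lt_iff_le_not_ge.symm
  letI : LocallyFiniteOrder E := Fintype.toLocallyFiniteOrder
  set M : Matrix E E ℝ := Matrix.of fun a b => IncidenceAlgebra.mu ℝ a b with hM
  refine Matrix.isUnit_det_of_left_inverse (B := M) ?_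
  ext a b
  have h1 : (M * zeta E) a b = ∑ x ∈ Finset.Icc a b,
      IncidenceAlgebra.mu ℝ a x * IncidenceAlgebra.zeta ℝ x b := by
    rw [Matrix.mul_apply]
    rw [← Finset.sum_subset (Finset.subset_univ (Finset.Icc a b))]
    · apply Finset.sum_congr rfl
      intro x hx
      simp [hM, zeta, IncidenceAlgebra.zeta_apply, (Finset.mem_Icc.mp hx).2]
    · intro x _ hx
      rw [Finset.mem_Icc, not_and_or] at hx
      rcases hx with hx | hx
      · simp [hM, IncidenceAlgebra.apply_eq_zero_of_not_le hx]
      · simp [hM, zeta, if_neg hx]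
  have h2 := IncidenceAlgebra.mu_mul_zeta ℝ E
  have h3 : (IncidenceAlgebra.mu ℝ * IncidenceAlgebra.zeta ℝ : IncidenceAlgebra ℝ E) a b
      = (1 : IncidenceAlgebra ℝ E) a b := by rw [h2]
  rw [IncidenceAlgebra.mul_apply, IncidenceAlgebra.one_apply] at h3
  rw [h1, h3, Matrix.one_apply]

/-- if `P` is ↓-Möbius monotone (every entry of `C⁻¹ P C` is
nonnegative) then `P` is ↓-weakly monotone. -/
theorem stmt2 {E : Type*} [Fintype E] [DecidableEq E] [PartialOrder E]
    [DecidableRel ((· ≤ ·) : E → E → Prop)]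
    (P : Matrix E E ℝ) (hP : IsStochastic P)
    (hMob : ∀ e e', 0 ≤ ((zeta E)⁻¹ * P * zeta E) e e') :
    ∀ π₁ π₂ : E → ℝ, IsProbVec π₁ → IsProbVec π₂ → DownLE π₁ π₂ →
      DownLE (π₁ ᵥ* P) (π₂ ᵥ* P) := by
  intro π₁ π₂ _ _ h12
  set C := zeta E with hC
  have hdet : IsUnit C.det := zeta_isUnit_det E
  -- DownLE as vecMul with C
  have hvec : ∀ π : E → ℝ, ∀ e, (π ᵥ* C) e = ∑ e' ∈ univ.filter (fun e' => e' ≤ e), π e' := by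
    intro π e
    rw [Finset.sum_filter, Matrix.vecMul]
    simp [dotProduct, hC, zeta, mul_ite]
  have key : ∀ π : E → ℝ, (π ᵥ* P) ᵥ* C = (π ᵥ* C) ᵥ* (C⁻¹ * P * C) := by
    intro π
    rw [Matrix.vecMul_vecMul, Matrix.vecMul_vecMul, ← Matrix.mul_assoc, ← Matrix.mul_assoc,
      Matrix.mul_nonsing_inv _ hdet, Matrix.one_mul]
  intro e
  rw [← hvec (π₁ ᵥ* P), ← hvec (π₂ ᵥ* P), key, key]
  rw [Matrix.vecMul, Matrix.vecMul, dotProduct, dotProduct]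
  apply Finset.sum_le_sum
  intro i _
  apply mul_le_mul_of_nonneg_right _ (hMob i e)
  rw [hvec, hvec]
  exact h12 i
end

section
/- On E = {0,1}² with the coordinatewise partial order, the function f defined by f(0,0) = −1, f(0,1) = −1, f(1,0) = −1, f(1,1) = 0 belongs to the class F (i.e., Σ_e π₁(e)f(e) ≤ Σ_e π₂(e)f(e) for all probability vectors π₁ ≼↑ π₂), but f is not ↑-Möbius monotone. Hence the set of ↑-Möbius monotone functions is strictly contained in F. -/
open Finset Matrix

/-- A function `f` is ↑-Möbius monotone if every entry of the row vector
`f C⁻¹` is nonnegative. -/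
def UpMobiusMonotoneFun {E : Type*} [Fintype E] [DecidableEq E] [PartialOrder E]
    [DecidableRel ((· ≤ ·) : E → E → Prop)] (f : E → ℝ) : Prop :=
  ∀ e, 0 ≤ (f ᵥ* (zeta E)⁻¹) e

noncomputable def mu2 : Matrix (Bool × Bool) (Bool × Bool) ℝ :=
  Matrix.of fun e e' =>
    (if e.1 ≤ e'.1 then (if e.1 = e'.1 then 1 else -1) else 0) *
    (if e.2 ≤ e'.2 then (if e.2 = e'.2 then 1 else -1) else 0)

lemma zeta_mul_mu2 : zeta (Bool × Bool) * mu2 = 1 := by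
  ext e e'
  rcases e with ⟨a, b⟩; rcases e' with ⟨c, d⟩
  fin_cases a <;> fin_cases b <;> fin_cases c <;> fin_cases d <;>
    simp [zeta, mu2, Matrix.mul_apply, Fintype.sum_prod_type, Prod.le_def,
      Matrix.one_apply, (by decide : ¬(true ≤ false))]

lemma zeta_inv_eq : (zeta (Bool × Bool))⁻¹ = mu2 :=
  Matrix.inv_eq_right_inv zeta_mul_mu2

lemma mu2_mul_zeta : mu2 * zeta (Bool × Bool) = 1 :=
  mul_eq_one_comm.mp zeta_mul_mu2

lemma mobius_subset (g : Bool × Bool → ℝ) (hg : UpMobiusMonotoneFun g) : InClassF g := by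
  intro π₁ π₂ _ _ hle
  set h : (Bool × Bool) → ℝ := g ᵥ* (zeta (Bool × Bool))⁻¹ with hh
  have hgrec : h ᵥ* zeta (Bool × Bool) = g := by
    rw [hh, zeta_inv_eq, Matrix.vecMul_vecMul, mu2_mul_zeta, Matrix.vecMul_one]
  have key : ∀ π : (Bool × Bool) → ℝ, ∑ e, π e * g e =
      ∑ e', h e' * ∑ e ∈ univ.filter (fun e => e' ≤ e), π e := by
    intro π
    conv_lhs => rw [← hgrec]
    simp only [Matrix.vecMul, dotProduct, zeta, Matrix.of_apply, Finset.mul_sum]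
    rw [Finset.sum_comm]
    refine Finset.sum_congr rfl fun e' _ => ?_
    rw [Finset.sum_filter]
    refine Finset.sum_congr rfl fun e _ => ?_
    by_cases he : e' ≤ e <;> simp [he] <;> ring
  rw [key π₁, key π₂]
  exact Finset.sum_le_sum fun e' _ => mul_le_mul_of_nonneg_left (hle e') (hg e')

/-- on the two-dimensional cube `{0,1}²` (here `Bool × Bool` with
the coordinatewise order), the function with value `-1` except at the top,
where it is `0`, lies in the class `F` but is not ↑-Möbius monotone; hence the
↑-Möbius monotone functions form a strict subset of `F`. -/
theorem stmt7 :
    InClassF (fun e : Bool × Bool => if e = (true, true) then (0 : ℝ) else -1) ∧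
    ¬ UpMobiusMonotoneFun
        (fun e : Bool × Bool => if e = (true, true) then (0 : ℝ) else -1) ∧
    {f : Bool × Bool → ℝ | UpMobiusMonotoneFun f} ⊂ {f : Bool × Bool → ℝ | InClassF f} := by
  have h1 : InClassF (fun e : Bool × Bool => if e = (true, true) then (0 : ℝ) else -1) := by
    intro π₁ π₂ hp1 hp2 hle
    have key : ∀ π : (Bool × Bool) → ℝ, ∑ e, π e = 1 →
        ∑ e, π e * (if e = (true, true) then (0 : ℝ) else -1) = π (true, true) - 1 := by
      intro π hπ
      simp only [Fintype.sum_prod_type, Fintype.sum_bool] at hπ ⊢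
      simp
      linarith
    rw [key π₁ hp1.2, key π₂ hp2.2]
    have := hle (true, true)
    have hfil : univ.filter (fun e' : Bool × Bool => (true, true) ≤ e') = {(true, true)} := by
      decide
    rw [hfil] at this
    simp at this
    linarith
  have h2 : ¬ UpMobiusMonotoneFun
      (fun e : Bool × Bool => if e = (true, true) then (0 : ℝ) else -1) := by
    intro h
    have := h (false, false)
    rw [zeta_inv_eq] at this
    simp [Matrix.vecMul, dotProduct, mu2, Fintype.sum_prod_type,
      (by decide : ¬(true ≤ false))] at this
    linarith
  exact ⟨h1, h2, fun f hf => mobius_subset f hf,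
    fun hsub => h2 (hsub h1)⟩
end

section
/- (Linearly ordered case, ↓ version.) Let E = {1,…,M} with the usual linear order, and let P be an irreducible stochastic matrix on E with strictly positive stationary distribution π. Let ←P(j,i) = π(i)P(i,j)/π(j), H(j) = Σ_{k≤j} π(k), and g(i) = ν(i)/π(i) for a given initial probability vector ν. Assume (i) g is non-increasing and (ii) ←P is stochastically monotone (for j ≤ j', ←P(j',{1,…,i}) ≤ ←P(j,{1,…,i}) for all i, where ←P(j,A) = Σ_{k∈A} ←P(j,k)). Define Λ(j,i) = 1{i ≤ j}·π(i)/H(j), ν*(i) = H(i)(g(i) − g(i+1)), and P*(i,j) = (H(j)/H(i))(←P(j,{1,…,i}) − ←P(j+1,{1,…,i})), with the conventions g(M+1) = 0 and ←P(M+1,·) = 0. Then Λ is a stochastic matrix, ν* is a probability vector with ν = ν*Λ, and P* is a stochastic matrix with ΛP = P*Λ. -/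
open Finset Matrix

lemma teleIco (f : ℕ → ℝ) (a : ℕ) : ∀ b, a ≤ b →
    ∑ n ∈ Finset.Ico a b, (f n - f (n+1)) = f a - f b := by
  intro b hb
  induction b, hb using Nat.le_induction with
  | base => simp
  | succ b hb ih => rw [Finset.sum_Ico_succ_top hb, ih]; ring

lemma tele_fin {M : ℕ} (f : ℕ → ℝ) (hf : ∀ n, M ≤ n → f n = 0) (i : Fin M) :
    ∑ j ∈ Finset.univ.filter (fun j : Fin M => i ≤ j), (f j - f (j+1)) = f i := by
  rw [Finset.sum_filter]
  simp only [Fin.le_def]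
  rw [Fin.sum_univ_eq_sum_range (fun n => if (i : ℕ) ≤ n then f n - f (n+1) else 0) M]
  rw [Finset.range_eq_Ico, ← Finset.sum_Ico_consecutive _ (Nat.zero_le (i : ℕ)) i.isLt.le]
  have h1 : ∀ n ∈ Finset.Ico 0 (i : ℕ), (if (i : ℕ) ≤ n then f n - f (n+1) else 0) = 0 := by
    intro n hn; rw [Finset.mem_Ico] at hn; exact if_neg (by omega)
  have h2 : ∀ n ∈ Finset.Ico (i : ℕ) M, (if (i : ℕ) ≤ n then f n - f (n+1) else 0)
      = f n - f (n+1) := by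
    intro n hn; rw [Finset.mem_Ico] at hn; exact if_pos hn.1
  rw [Finset.sum_eq_zero h1, Finset.sum_congr rfl h2, zero_add,
    teleIco f (i : ℕ) M i.isLt.le, hf M le_rfl]
  ring

/-- strong stationary duality on the linearly ordered state space
`{1,…,M}` (modelled as `Fin M`), ↓-version.  Here `H(j) = Σ_{k ≤ j} π(k)`,
`g = ν/π` is non-increasing, the time reversal `←P` is stochastically monotone,
`Λ(j,i) = 1{i ≤ j} π(i)/H(j)`, `ν*(i) = H(i)(g(i) − g(i+1))` and
`P*(i,j) = (H(j)/H(i))(←P(j,{1,…,i}) − ←P(j+1,{1,…,i}))`, with the conventions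
`g(M+1) = 0` and `←P(M+1,·) = 0` (encoded via `gext`, `Prevext`).  Then `Λ` is
stochastic, `ν*` is a probability vector with `ν = ν*Λ`, and `P*` is stochastic
with `ΛP = P*Λ`. -/
theorem stmt11 (M : ℕ)
    (P : Matrix (Fin M) (Fin M) ℝ) (hP : IsStochastic P)
    (hirr : ∀ i j : Fin M, ∃ n : ℕ, 0 < (P ^ n) i j)
    (π : Fin M → ℝ) (hπ : IsProbVec π) (hπpos : ∀ i, 0 < π i)
    (hstat : ∀ j, ∑ i, π i * P i j = π j)
    (ν : Fin M → ℝ) (hν : IsProbVec ν)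
    (Prev : Matrix (Fin M) (Fin M) ℝ) (hPrev : ∀ j i, Prev j i = π i * P i j / π j)
    (H : Fin M → ℝ) (hH : ∀ j, H j = ∑ k ∈ univ.filter (fun k => k ≤ j), π k)
    (g : Fin M → ℝ) (hg : ∀ i, g i = ν i / π i)
    (hgmon : ∀ i j : Fin M, i ≤ j → g j ≤ g i)
    (hstmon : ∀ j j' : Fin M, j ≤ j' → ∀ i : Fin M,
      (∑ k ∈ univ.filter (fun k => k ≤ i), Prev j' k)
        ≤ ∑ k ∈ univ.filter (fun k => k ≤ i), Prev j k)
    (gext : ℕ → ℝ) (hgext : ∀ n : ℕ, gext n = if h : n < M then g ⟨n, h⟩ else 0)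
    (Prevext : ℕ → Fin M → ℝ)
    (hPrevext : ∀ (n : ℕ) (k : Fin M),
      Prevext n k = if h : n < M then Prev ⟨n, h⟩ k else 0)
    (Λ : Matrix (Fin M) (Fin M) ℝ)
    (hΛ : ∀ j i, Λ j i = if i ≤ j then π i / H j else 0)
    (νd : Fin M → ℝ)
    (hνd : ∀ i : Fin M, νd i = H i * (g i - gext ((i : ℕ) + 1)))
    (Pd : Matrix (Fin M) (Fin M) ℝ)
    (hPd : ∀ i j : Fin M, Pd i j = (H j / H i) *
      ((∑ k ∈ univ.filter (fun k => k ≤ i), Prev j k)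
        - ∑ k ∈ univ.filter (fun k => k ≤ i), Prevext ((j : ℕ) + 1) k)) :
    IsStochastic Λ ∧ IsProbVec νd ∧ (∀ i, ν i = ∑ j, νd j * Λ j i) ∧
    IsStochastic Pd ∧ Λ * P = Pd * Λ := by
  have hHpos : ∀ j, 0 < H j := by
    intro j; rw [hH]
    refine Finset.sum_pos (fun k _ => hπpos k) ⟨j, Finset.mem_filter.2 ⟨Finset.mem_univ j, le_rfl⟩⟩
  have hHne : ∀ j, H j ≠ 0 := fun j => (hHpos j).ne'
  have hgext_fin : ∀ i : Fin M, gext (i : ℕ) = g i := by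
    intro i; rw [hgext, dif_pos i.isLt, Fin.eta]
  have hPrevext_fin : ∀ l k : Fin M, Prevext (l : ℕ) k = Prev l k := by
    intro l k; rw [hPrevext, dif_pos l.isLt, Fin.eta]
  have hPrevnn : ∀ a b : Fin M, 0 ≤ Prev a b := by
    intro a b; rw [hPrev]
    exact div_nonneg (mul_nonneg (hπpos b).le (hP.1 b a)) (hπpos a).le
  have hgnn : ∀ i, 0 ≤ g i := by
    intro i; rw [hg]; exact div_nonneg (hν.1 i) (hπpos i).le
  -- Λ stochastic
  have hΛnn : ∀ j i, 0 ≤ Λ j i := by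
    intro j i; rw [hΛ]
    by_cases h : i ≤ j
    · rw [if_pos h]; exact div_nonneg (hπpos i).le (hHpos j).le
    · rw [if_neg h]
  have hΛrow : ∀ j, ∑ i, Λ j i = 1 := by
    intro j
    have h1 : ∑ i, Λ j i = ∑ i ∈ univ.filter (fun i => i ≤ j), π i / H j := by
      rw [Finset.sum_filter]
      exact Finset.sum_congr rfl (fun i _ => by rw [hΛ])
    rw [h1, ← Finset.sum_div, ← hH j, div_self (hHne j)]
  -- duality ν = νd Λ
  have hdual : ∀ i, ν i = ∑ j, νd j * Λ j i := by
    intro i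
    have h1 : ∀ j, νd j * Λ j i
        = (if i ≤ j then π i * (gext (j : ℕ) - gext ((j : ℕ) + 1)) else 0) := by
      intro j
      rw [hνd, hΛ]
      by_cases h : i ≤ j
      · rw [if_pos h, if_pos h, hgext_fin j]
        field_simp [hHne j]
      · rw [if_neg h, if_neg h, mul_zero]
    rw [Finset.sum_congr rfl (fun j _ => h1 j), ← Finset.sum_filter, ← Finset.mul_sum,
      tele_fin gext (fun n hn => by rw [hgext, dif_neg (by omega)]) i, hgext_fin i, hg,
      mul_div_cancel₀ _ (hπpos i).ne']
  have hνdsum : ∑ i, νd i = 1 := by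
    have h1 : ∑ i, ν i = ∑ i, ∑ j, νd j * Λ j i :=
      Finset.sum_congr rfl (fun i _ => hdual i)
    rw [hν.2, Finset.sum_comm] at h1
    simp_rw [← Finset.mul_sum] at h1
    simp_rw [hΛrow, mul_one] at h1
    exact h1.symm
  have hνdnn : ∀ i, 0 ≤ νd i := by
    intro i; rw [hνd]
    refine mul_nonneg (hHpos i).le (sub_nonneg.2 ?_)
    rw [hgext]
    by_cases h : (i : ℕ) + 1 < M
    · rw [dif_pos h]
      exact hgmon i ⟨(i : ℕ) + 1, h⟩ (by simp [Fin.le_def])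
    · rw [dif_neg h]; exact hgnn i
  -- ΛP = PdΛ
  have hcomm : Λ * P = Pd * Λ := by
    ext j i
    rw [Matrix.mul_apply, Matrix.mul_apply]
    set F : ℕ → ℝ := fun n => ∑ k ∈ univ.filter (fun k => k ≤ j), Prevext n k with hF
    have hF0 : ∀ n, M ≤ n → F n = 0 := by
      intro n hn
      exact Finset.sum_eq_zero (fun k _ => by rw [hPrevext, dif_neg (by omega)])
    have hFfin : ∀ l : Fin M, F (l : ℕ) = ∑ k ∈ univ.filter (fun k => k ≤ j), Prev l k := by
      intro l
      exact Finset.sum_congr rfl (fun k _ => hPrevext_fin l k)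
    have hL : ∑ k, Λ j k * P k i
        = (π i / H j) * ∑ k ∈ univ.filter (fun k => k ≤ j), Prev i k := by
      have h1 : ∀ k, Λ j k * P k i = (if k ≤ j then (π i / H j) * Prev i k else 0) := by
        intro k
        rw [hΛ]
        by_cases h : k ≤ j
        · rw [if_pos h, if_pos h, hPrev i k]
          field_simp [hHne j, (hπpos i).ne']
        · rw [if_neg h, if_neg h, zero_mul]
      rw [Finset.sum_congr rfl (fun k _ => h1 k), ← Finset.sum_filter, ← Finset.mul_sum]
    have hR : ∑ l, Pd j l * Λ l i
        = (π i / H j) * ∑ k ∈ univ.filter (fun k => k ≤ j), Prev i k := by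
      have h1 : ∀ l, Pd j l * Λ l i
          = (if i ≤ l then (π i / H j) * (F (l : ℕ) - F ((l : ℕ) + 1)) else 0) := by
        intro l
        rw [hPd, hΛ]
        by_cases h : i ≤ l
        · rw [if_pos h, if_pos h, hFfin l]
          field_simp [hHne j, hHne l]
          ring
        · rw [if_neg h, if_neg h, mul_zero]
      rw [Finset.sum_congr rfl (fun l _ => h1 l), ← Finset.sum_filter, ← Finset.mul_sum,
        tele_fin F hF0 i, hFfin i]
    rw [hL, hR]
  -- Pd stochastic
  have hPdnn : ∀ e e', 0 ≤ Pd e e' := by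
    intro e e'; rw [hPd]
    refine mul_nonneg (div_nonneg (hHpos e').le (hHpos e).le) (sub_nonneg.2 ?_)
    by_cases h : (e' : ℕ) + 1 < M
    · have h2 : ∀ k ∈ univ.filter (fun k => k ≤ e), Prevext ((e' : ℕ) + 1) k
          = Prev ⟨(e' : ℕ) + 1, h⟩ k := by
        intro k _; rw [hPrevext, dif_pos h]
      rw [Finset.sum_congr rfl h2]
      exact hstmon e' ⟨(e' : ℕ) + 1, h⟩ (by simp [Fin.le_def]) e
    · have h2 : ∀ k ∈ univ.filter (fun k => k ≤ e), Prevext ((e' : ℕ) + 1) k = 0 := by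
        intro k _; rw [hPrevext, dif_neg h]
      rw [Finset.sum_congr rfl h2, Finset.sum_const_zero]
      exact Finset.sum_nonneg (fun k _ => hPrevnn e' k)
  have hPdrow : ∀ e, ∑ j, Pd e j = 1 := by
    intro e
    have h1 : ∑ j, Pd e j = ∑ j, ∑ k, Pd e j * Λ j k := by
      refine Finset.sum_congr rfl (fun j _ => ?_)
      rw [← Finset.mul_sum, hΛrow j, mul_one]
    rw [h1, Finset.sum_comm]
    have h2 : ∀ k, ∑ j, Pd e j * Λ j k = (Λ * P) e k := by
      intro k; rw [hcomm, Matrix.mul_apply]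
    rw [Finset.sum_congr rfl (fun k _ => h2 k)]
    change ∑ k, ∑ j, Λ e j * P j k = 1
    rw [Finset.sum_comm]
    simp_rw [← Finset.mul_sum, hP.2, mul_one]
    exact hΛrow e
  exact ⟨⟨hΛnn, hΛrow⟩, ⟨hνdnn, hνdsum⟩, hdual, ⟨hPdnn, hPdrow⟩, hcomm⟩
end

section
/- For the random walk on the d-dimensional cube E = {0,1}^d with parameters α_i, β_i > 0 (transitions P(e, e+s_i) = α_i when e_i = 0, P(e, e−s_i) = β_i when e_i = 1, P(e,e) = 1 − Σ_{i: e_i=0} α_i − Σ_{i: e_i=1} β_i, all other entries 0), assuming all diagonal entries are nonnegative: P is ↓-Möbius monotone if and only if Σ_{i=1}^d α_i + Σ_{i=1}^d β_i ≤ 1. -/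
open Finset Matrix

instance {d : ℕ} :
    DecidableRel ((· ≤ ·) : (Fin d → Bool) → (Fin d → Bool) → Prop) :=
  fun e e' => decidable_of_iff (∀ i, e i ≤ e' i) Pi.le_def.symm

/-- Transition matrix of the random walk on the `d`-dimensional cube
`{0,1}^d`: from `e`, coordinate `i` flips `0 → 1` with probability `α i`,
flips `1 → 0` with probability `β i`, and the walk stays at `e` with the
remaining probability; all other transitions have probability `0`. -/
noncomputable def cubeP {d : ℕ} (α β : Fin d → ℝ) :
    Matrix (Fin d → Bool) (Fin d → Bool) ℝ :=
  Matrix.of fun e e' =>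
    (if e' = e then
        1 - (∑ i ∈ univ.filter (fun i => e i = false), α i)
          - (∑ i ∈ univ.filter (fun i => e i = true), β i)
      else 0)
    + ∑ i, ((if e i = false ∧ e' = Function.update e i true then α i else 0)
          + (if e i = true ∧ e' = Function.update e i false then β i else 0))

/-- The stationary distribution of the cube walk:
`π(e) = Π_{i : e_i = 1} α_i/(α_i+β_i) · Π_{i : e_i = 0} β_i/(α_i+β_i)`. -/
noncomputable def cubePi {d : ℕ} (α β : Fin d → ℝ) : (Fin d → Bool) → ℝ :=
  fun e => ∏ i, (if e i then α i / (α i + β i) else β i / (α i + β i))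

/-! ### Auxiliary machinery -/

/-- The Möbius matrix of the cube poset, a right inverse of `zeta`. -/
noncomputable def mob (d : ℕ) : Matrix (Fin d → Bool) (Fin d → Bool) ℝ :=
  Matrix.of fun e e' =>
    if e ≤ e' then (-1 : ℝ) ^ (univ.filter fun i => e i ≠ e' i).card else 0

/-- The candidate value of `C⁻¹ P C` for the cube walk. -/
noncomputable def cubeN {d : ℕ} (α β : Fin d → ℝ) :
    Matrix (Fin d → Bool) (Fin d → Bool) ℝ :=
  Matrix.of fun e e' =>
    (if e' = e then 1 - ∑ i ∈ univ.filter (fun i => e i = false), (α i + β i) else 0)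
    + ∑ i, (if e i = true ∧ e' = Function.update e i false then β i else 0)

lemma bool_aux1 : ∀ {a b c : Bool}, a ≤ b → b ≤ c → b ≠ c → a ≠ c := by decide
lemma bool_aux2 : ∀ {a c : Bool} (b : Bool), a ≤ c → a ≠ c → a ≤ b := by decide
lemma bool_aux3 : ∀ {a c : Bool}, a ≤ c → a ≠ c → a = false := by decide
lemma bool_aux4 : ∀ {a c : Bool}, a ≤ c → a ≠ c → c = true := by decide
lemma bool_le_of_le_of_false : ∀ {a c : Bool}, a ≤ c → c = false → a = false := by decide
lemma bool_true_le : ∀ {c : Bool}, true ≤ c → c = true := by decide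
lemma bool_not_true : ∀ {b : Bool}, ¬ b = true → b = false := by decide
lemma bool_not_false : ∀ {b : Bool}, ¬ b = false → b = true := by decide

lemma sum_powerset_real {ι : Type*} [DecidableEq ι] (A : Finset ι) :
    ∑ S ∈ A.powerset, (-1 : ℝ) ^ S.card = if A = ∅ then 1 else 0 := by
  have h := congrArg (fun z : ℤ => (z : ℝ))
    (Finset.sum_powerset_neg_one_pow_card (x := A))
  push_cast at h
  simpa using h

lemma zeta_mul_mob (d : ℕ) : zeta (Fin d → Bool) * mob d = 1 := by
  ext e e'
  simp only [mul_apply, zeta, mob, Matrix.of_apply, one_apply, ite_mul, one_mul, zero_mul]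
  by_cases he' : e ≤ e'
  · have hne : ∀ f : Fin d → Bool,
        (if e ≤ f then (if f ≤ e' then (-1:ℝ) ^ (univ.filter fun i => f i ≠ e' i).card else 0) else 0)
        = if e ≤ f ∧ f ≤ e' then (-1:ℝ) ^ (univ.filter fun i => f i ≠ e' i).card else 0 := by
      intro f; by_cases h1 : e ≤ f <;> by_cases h2 : f ≤ e' <;> simp [h1, h2]
    rw [Finset.sum_congr rfl fun f _ => hne f, ← Finset.sum_filter]
    have key : ∑ f ∈ univ.filter (fun f => e ≤ f ∧ f ≤ e'),
        (-1:ℝ) ^ (univ.filter fun i => f i ≠ e' i).card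
        = ∑ S ∈ (univ.filter fun i => e i ≠ e' i).powerset, (-1:ℝ) ^ S.card := by
      refine Finset.sum_nbij' (fun f => univ.filter fun i => f i ≠ e' i)
        (fun S => fun k => e' k && !(decide (k ∈ S))) ?_ ?_ ?_ ?_ ?_
      · intro f hf
        simp only [mem_filter, mem_univ, true_and] at hf
        simp only [mem_powerset]
        intro i hi
        simp only [mem_filter, mem_univ, true_and] at hi ⊢
        exact bool_aux1 (hf.1 i) (hf.2 i) hi
      · intro S hS
        simp only [mem_powerset] at hS
        simp only [mem_filter, mem_univ, true_and]
        refine ⟨fun k => ?_, fun k => Bool.and_le_left _ _⟩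
        by_cases hk : k ∈ S
        · have hne := (mem_filter.mp (hS hk)).2
          exact bool_aux2 _ (he' k) hne
        · simpa [hk] using he' k
      · intro f hf
        simp only [mem_filter, mem_univ, true_and] at hf
        funext k
        by_cases hk : f k = e' k
        · simp [Finset.mem_filter, hk]
        · simp only [Finset.mem_filter, mem_univ, true_and]
          rw [bool_aux3 (hf.2 k) hk]
          simp [hk]
      · intro S hS
        simp only [mem_powerset] at hS
        ext k
        simp only [mem_filter, mem_univ, true_and]
        by_cases hk : k ∈ S
        · have hne := (mem_filter.mp (hS hk)).2
          rw [bool_aux4 (he' k) hne]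
          simp [hk]
        · simp [hk]
      · intro f _; rfl
    rw [key, sum_powerset_real]
    have hiff : (univ.filter fun i => e i ≠ e' i) = ∅ ↔ e = e' := by
      constructor
      · intro h
        funext i
        by_contra hi
        have : i ∈ univ.filter fun i => e i ≠ e' i := by simp [hi]
        simp [h] at this
      · intro h; subst h; simp
    by_cases h : e = e' <;> simp [h, hiff]
  · have hee : e ≠ e' := fun h => he' (h ▸ le_refl e)
    rw [if_neg hee]
    refine Finset.sum_eq_zero fun f _ => ?_
    by_cases h1 : e ≤ f
    · by_cases h2 : f ≤ e'
      · exact absurd (h1.trans h2) he'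
      · simp [h1, h2]
    · simp [h1]

lemma sum_single_ite {γ : Type*} [Fintype γ] [DecidableEq γ]
    (Q : γ → Prop) [DecidablePred Q] (P : Prop) [Decidable P] (v : γ) (c : ℝ) :
    ∑ g : γ, (if Q g then (if P ∧ g = v then c else 0) else 0) = if P ∧ Q v then c else 0 := by
  rw [Finset.sum_eq_single v]
  · by_cases hP : P <;> by_cases hQ : Q v <;> simp [hP, hQ]
  · intro g _ hg; by_cases hQ : Q g <;> simp [hQ, hg]
  · intro h; exact absurd (mem_univ v) h

lemma cond_iff {d : ℕ} (e' f : Fin d → Bool) (i : Fin d) :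
    (f i = true ∧ e' = Function.update f i false)
      ↔ (e' i = false ∧ f = Function.update e' i true) := by
  constructor
  · rintro ⟨h1, h2⟩
    subst h2
    refine ⟨Function.update_self .., ?_⟩
    rw [Function.update_idem, ← h1, Function.update_eq_self]
  · rintro ⟨h1, h2⟩
    subst h2
    refine ⟨Function.update_self .., ?_⟩
    rw [Function.update_idem, ← h1, Function.update_eq_self]

lemma lhs_eval {d : ℕ} (α β : Fin d → ℝ) (e e' : Fin d → Bool) :
    (zeta (Fin d → Bool) * cubeN α β) e e'
      = (if e ≤ e' then 1 - ∑ i ∈ univ.filter (fun i => e' i = false), (α i + β i) else 0)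
        + ∑ i, (if e' i = false ∧ e ≤ Function.update e' i true then β i else 0) := by
  simp only [mul_apply, zeta, cubeN, Matrix.of_apply, ite_mul, one_mul, zero_mul]
  have split : ∀ f : Fin d → Bool,
      (if e ≤ f then
        ((if e' = f then 1 - ∑ i ∈ univ.filter (fun i => f i = false), (α i + β i) else 0)
          + ∑ i, (if f i = true ∧ e' = Function.update f i false then β i else 0)) else 0)
      = (if e ≤ f then (if e' = f then 1 - ∑ i ∈ univ.filter (fun i => f i = false), (α i + β i) else 0) else 0)
        + ∑ i, (if e ≤ f then (if f i = true ∧ e' = Function.update f i false then β i else 0) else 0) := by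
    intro f; by_cases h : e ≤ f <;> simp [h]
  rw [Finset.sum_congr rfl fun f _ => split f, Finset.sum_add_distrib]
  congr 1
  · rw [Finset.sum_eq_single e']
    · by_cases h : e ≤ e' <;> simp [h]
    · intro f _ hf
      by_cases h : e ≤ f
      · rw [if_pos h, if_neg (Ne.symm hf)]
      · rw [if_neg h]
    · intro h; exact absurd (mem_univ e') h
  · rw [Finset.sum_comm]
    refine Finset.sum_congr rfl fun i _ => ?_
    have : ∀ f : Fin d → Bool,
        (if e ≤ f then (if f i = true ∧ e' = Function.update f i false then β i else 0) else 0)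
        = (if e ≤ f then (if e' i = false ∧ f = Function.update e' i true then β i else 0) else 0) := by
      intro f
      by_cases h : e ≤ f
      · simp only [h, if_true]
        exact if_congr (cond_iff e' f i) rfl rfl
      · simp [h]
    rw [Finset.sum_congr rfl fun f _ => this f]
    exact sum_single_ite (fun f => e ≤ f) (e' i = false) (Function.update e' i true) (β i)

lemma rhs_eval {d : ℕ} (α β : Fin d → ℝ) (e e' : Fin d → Bool) :
    (cubeP α β * zeta (Fin d → Bool)) e e'
      = (if e ≤ e' then
          1 - (∑ i ∈ univ.filter (fun i => e i = false), α i)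
            - (∑ i ∈ univ.filter (fun i => e i = true), β i) else 0)
        + ∑ i, ((if e i = false ∧ Function.update e i true ≤ e' then α i else 0)
              + (if e i = true ∧ Function.update e i false ≤ e' then β i else 0)) := by
  simp only [mul_apply, cubeP, zeta, Matrix.of_apply, mul_ite, mul_one, mul_zero]
  have split : ∀ g : Fin d → Bool,
      (if g ≤ e' then
        ((if g = e then 1 - (∑ i ∈ univ.filter (fun i => e i = false), α i)
            - (∑ i ∈ univ.filter (fun i => e i = true), β i) else 0)
          + ∑ i, ((if e i = false ∧ g = Function.update e i true then α i else 0)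
                + (if e i = true ∧ g = Function.update e i false then β i else 0))) else 0)
      = (if g ≤ e' then (if g = e then 1 - (∑ i ∈ univ.filter (fun i => e i = false), α i)
            - (∑ i ∈ univ.filter (fun i => e i = true), β i) else 0) else 0)
        + (∑ i, (if g ≤ e' then (if e i = false ∧ g = Function.update e i true then α i else 0) else 0)
          + ∑ i, (if g ≤ e' then (if e i = true ∧ g = Function.update e i false then β i else 0) else 0)) := by
    intro g; by_cases h : g ≤ e' <;> simp [h, Finset.sum_add_distrib]
  rw [Finset.sum_congr rfl fun g _ => split g, Finset.sum_add_distrib]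
  congr 1
  · rw [Finset.sum_eq_single e]
    · by_cases h : e ≤ e' <;> simp [h]
    · intro g _ hg
      by_cases h : g ≤ e' <;> simp [h, hg]
    · intro h; exact absurd (mem_univ e) h
  · rw [Finset.sum_add_distrib]
    have hA : (∑ g : Fin d → Bool, ∑ i : Fin d,
        (if g ≤ e' then (if e i = false ∧ g = Function.update e i true then α i else 0) else 0))
        = ∑ i : Fin d, (if e i = false ∧ Function.update e i true ≤ e' then α i else 0) := by
      rw [Finset.sum_comm]
      exact Finset.sum_congr rfl fun i _ =>
        sum_single_ite (fun g => g ≤ e') (e i = false) (Function.update e i true) (α i)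
    have hB : (∑ g : Fin d → Bool, ∑ i : Fin d,
        (if g ≤ e' then (if e i = true ∧ g = Function.update e i false then β i else 0) else 0))
        = ∑ i : Fin d, (if e i = true ∧ Function.update e i false ≤ e' then β i else 0) := by
      rw [Finset.sum_comm]
      exact Finset.sum_congr rfl fun i _ =>
        sum_single_ite (fun g => g ≤ e') (e i = true) (Function.update e i false) (β i)
    rw [hA, hB, ← Finset.sum_add_distrib]

lemma N_eq {d : ℕ} (α β : Fin d → ℝ) :
    zeta (Fin d → Bool) * cubeN α β = cubeP α β * zeta (Fin d → Bool) := by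
  ext e e'
  rw [lhs_eval, rhs_eval]
  by_cases he' : e ≤ e'
  · rw [if_pos he', if_pos he']
    have hLβ : (∑ i, if e' i = false ∧ e ≤ Function.update e' i true then β i else 0)
        = ∑ i ∈ univ.filter (fun i => e' i = false), β i := by
      rw [Finset.sum_filter]
      refine Finset.sum_congr rfl fun i _ => ?_
      by_cases h : e' i = false
      · rw [if_pos ⟨h, le_trans he'
          (le_update_iff.mpr ⟨Bool.le_true _, fun j _ => le_refl _⟩)⟩, if_pos h]
      · rw [if_neg (fun hc => h hc.1), if_neg h]
    have hRα : (∑ i, if e i = false ∧ Function.update e i true ≤ e' then α i else 0)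
        = ∑ i ∈ univ.filter (fun i => e i = false ∧ e' i = true), α i := by
      rw [Finset.sum_filter]
      refine Finset.sum_congr rfl fun i _ => ?_
      refine if_congr ?_ rfl rfl
      constructor
      · rintro ⟨h1, h2⟩
        exact ⟨h1, bool_true_le (update_le_iff.mp h2).1⟩
      · rintro ⟨h1, h2⟩
        exact ⟨h1, update_le_iff.mpr ⟨by rw [h2], fun j _ => he' j⟩⟩
    have hRβ : (∑ i, if e i = true ∧ Function.update e i false ≤ e' then β i else 0)
        = ∑ i ∈ univ.filter (fun i => e i = true), β i := by
      rw [Finset.sum_filter]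
      refine Finset.sum_congr rfl fun i _ => ?_
      by_cases h : e i = true
      · rw [if_pos ⟨h, update_le_iff.mpr ⟨Bool.false_le _, fun j _ => he' j⟩⟩, if_pos h]
      · rw [if_neg (fun hc => h hc.1), if_neg h]
    rw [Finset.sum_add_distrib, Finset.sum_add_distrib, hLβ, hRα, hRβ]
    have hsplit : (∑ i ∈ univ.filter (fun i => e i = false), α i)
        = (∑ i ∈ univ.filter (fun i => e i = false ∧ e' i = true), α i)
          + ∑ i ∈ univ.filter (fun i => e' i = false), α i := by
      have h1 : univ.filter (fun i : Fin d => e' i = false)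
          = univ.filter (fun i => e i = false ∧ ¬ (e' i = true)) := by
        ext i
        simp only [mem_filter, mem_univ, true_and]
        constructor
        · intro h
          exact ⟨bool_le_of_le_of_false (he' i) h, fun hc => by rw [hc] at h; cases h⟩
        · rintro ⟨_, h⟩
          exact bool_not_true h
      rw [h1, ← Finset.filter_filter, ← Finset.filter_filter,
        Finset.sum_filter_add_sum_filter_not]
    linarith
  · rw [if_neg he', if_neg he']
    rw [zero_add, zero_add]
    refine Finset.sum_congr rfl fun i _ => ?_
    have hα0 : (if e i = false ∧ Function.update e i true ≤ e' then α i else 0) = 0 := by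
      rw [if_neg]
      rintro ⟨h1, h2⟩
      refine he' (le_trans ?_ h2)
      exact le_update_iff.mpr ⟨Bool.le_true _, fun j _ => le_refl _⟩
    rw [hα0, zero_add]
    refine if_congr ?_ rfl rfl
    constructor
    · rintro ⟨h1, h2⟩
      have h2' := le_update_iff.mp h2
      have hei : e i = true := by
        by_contra hc
        refine he' fun j => ?_
        by_cases hj : j = i
        · subst hj
          rw [bool_not_true hc]
          exact Bool.false_le _
        · exact h2'.2 j hj
      exact ⟨hei, update_le_iff.mpr ⟨Bool.false_le _, fun j hj => h2'.2 j hj⟩⟩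
    · rintro ⟨h1, h2⟩
      have h2' := update_le_iff.mp h2
      have hei' : e' i = false := by
        by_contra hc
        refine he' fun j => ?_
        by_cases hj : j = i
        · subst hj
          rw [h1, bool_not_false hc]
        · exact h2'.2 j hj
      exact ⟨hei', le_update_iff.mpr ⟨Bool.le_true _, fun j hj => h2'.2 j hj⟩⟩

lemma conj_eq {d : ℕ} (α β : Fin d → ℝ) :
    (zeta (Fin d → Bool))⁻¹ * cubeP α β * zeta (Fin d → Bool) = cubeN α β := by
  have h1 := zeta_mul_mob d
  have hdet : IsUnit (zeta (Fin d → Bool)).det := Matrix.isUnit_det_of_right_inverse h1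
  have h2 : (zeta (Fin d → Bool))⁻¹ * zeta (Fin d → Bool) = 1 :=
    Matrix.nonsing_inv_mul _ hdet
  rw [Matrix.mul_assoc, ← N_eq, ← Matrix.mul_assoc, h2, Matrix.one_mul]

/-- the cube walk is ↓-Möbius monotone (every entry of
`C⁻¹ P C` is nonnegative) iff `Σ α_i + Σ β_i ≤ 1`. -/
theorem stmt13 {d : ℕ} (α β : Fin d → ℝ)
    (hα : ∀ i, 0 < α i) (hβ : ∀ i, 0 < β i)
    (hdiag : ∀ e, 0 ≤ cubeP α β e e) :
    (∀ e e', 0 ≤ ((zeta (Fin d → Bool))⁻¹ * cubeP α β * zeta (Fin d → Bool)) e e')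
    ↔ (∑ i, α i) + (∑ i, β i) ≤ 1 := by
  rw [show (∀ e e', 0 ≤ ((zeta (Fin d → Bool))⁻¹ * cubeP α β * zeta (Fin d → Bool)) e e')
      ↔ (∀ e e', 0 ≤ cubeN α β e e') from by rw [conj_eq]]
  constructor
  · intro h
    have h0 := h (fun _ => false) (fun _ => false)
    simp [cubeN, Finset.sum_add_distrib] at h0
    linarith
  · intro h e e'
    simp only [cubeN, Matrix.of_apply]
    refine add_nonneg ?_ (Finset.sum_nonneg fun i _ => ?_)
    · split
      · have hsub : (∑ i ∈ univ.filter (fun i => e i = false), (α i + β i))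
            ≤ ∑ i, (α i + β i) :=
          Finset.sum_le_sum_of_subset_of_nonneg (Finset.filter_subset _ _)
            (fun i _ _ => add_nonneg (hα i).le (hβ i).le)
        have hd : (∑ i, (α i + β i)) = (∑ i, α i) + ∑ i, β i := Finset.sum_add_distrib
        linarith
      · exact le_refl 0
    · split
      · exact (hβ i).le
      · exact le_refl 0
end

section
/- For the random walk on the d-dimensional cube E = {0,1}^d with parameters α_i, β_i > 0 and Σ_{i=1}^d α_i + Σ_{i=1}^d β_i ≤ 1 (transitions P(e, e+s_i) = α_i when e_i = 0, P(e, e−s_i) = β_i when e_i = 1, P(e,e) = 1 − Σ_{i: e_i=0} α_i − Σ_{i: e_i=1} β_i, all other entries 0), with stationary distribution π(e) = Π_{i: e_i=1} α_i/(α_i+β_i) · Π_{i: e_i=0} β_i/(α_i+β_i): for every n ≥ 1, the separation distance from stationarity after n steps starting at the minimal state (0,…,0) equals s(δ_{(0,…,0)}Pⁿ, π) = Σ_{k=1}^d (−1)^{k−1} Σ_{γ ⊆ {1,…,d}, |γ|=k} (1 − s_γ)ⁿ, where s_γ = Σ_{i∈γ}(α_i + β_i). -/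
open Finset Matrix

namespace Stmt16Aux

variable {d : ℕ}

noncomputable def ev (α β : Fin d → ℝ) (γ : Finset (Fin d)) (e : Fin d → Bool) : ℝ :=
  ∏ i ∈ γ, (if e i then -β i else α i)

lemma ev_update (α β : Fin d → ℝ) (γ : Finset (Fin d)) (e : Fin d → Bool) (j : Fin d) (x : Bool) :
    ev α β γ (Function.update e j x) =
      if j ∈ γ then (if x then -β j else α j) * ∏ i ∈ γ.erase j, (if e i then -β i else α i)
      else ev α β γ e := by
  unfold ev
  by_cases hj : j ∈ γ
  · rw [if_pos hj, ← Finset.mul_prod_erase _ _ hj, Function.update_self]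
    congr 1
    exact Finset.prod_congr rfl fun i hi => by
      rw [Function.update_of_ne (Finset.ne_of_mem_erase hi)]
  · rw [if_neg hj]
    exact Finset.prod_congr rfl fun i hi => by
      rw [Function.update_of_ne (fun h : i = j => hj (h ▸ hi))]

lemma sum_ite_eq_update (u : Fin d → Bool) (c : ℝ) (f : (Fin d → Bool) → ℝ) (P : Prop)
    [Decidable P] :
    ∑ e' : Fin d → Bool, (if P ∧ e' = u then c else 0) * f e' = if P then c * f u else 0 := by
  by_cases hP : P
  · simp only [hP, true_and, if_pos]
    rw [Finset.sum_congr rfl (fun e' _ => by rw [ite_mul, zero_mul])]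
    rw [Finset.sum_ite_eq' Finset.univ u (fun e' => c * f e'), if_pos (Finset.mem_univ u)]
  · simp [hP]

lemma eig (α β : Fin d → ℝ) (γ : Finset (Fin d)) (e : Fin d → Bool) :
    ∑ e' : Fin d → Bool, cubeP α β e e' * ev α β γ e'
      = (1 - ∑ i ∈ γ, (α i + β i)) * ev α β γ e := by
  have expand : ∀ e' : Fin d → Bool, cubeP α β e e' * ev α β γ e' =
      (if e' = e then (1 - (∑ i ∈ univ.filter (fun i => e i = false), α i)
          - (∑ i ∈ univ.filter (fun i => e i = true), β i)) * ev α β γ e' else 0)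
      + ∑ i, ((if e i = false ∧ e' = Function.update e i true then α i else 0) * ev α β γ e'
            + (if e i = true ∧ e' = Function.update e i false then β i else 0) * ev α β γ e') := by
    intro e'
    show (Matrix.of _ : Matrix _ _ ℝ) e e' * _ = _
    rw [Matrix.of_apply, add_mul, Finset.sum_mul, ite_mul, zero_mul]
    congr 1
    exact Finset.sum_congr rfl fun i _ => by rw [add_mul]
  rw [Finset.sum_congr rfl fun e' _ => expand e', Finset.sum_add_distrib,
    Finset.sum_ite_eq' Finset.univ e, if_pos (Finset.mem_univ e), Finset.sum_comm]
  have flip : ∀ i : Fin d, (∑ e' : Fin d → Bool,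
      ((if e i = false ∧ e' = Function.update e i true then α i else 0) * ev α β γ e'
        + (if e i = true ∧ e' = Function.update e i false then β i else 0) * ev α β γ e'))
      = (if e i = false then α i * ev α β γ (Function.update e i true) else 0)
      + (if e i = true then β i * ev α β γ (Function.update e i false) else 0) := by
    intro i
    rw [Finset.sum_add_distrib, sum_ite_eq_update, sum_ite_eq_update]
  rw [Finset.sum_congr rfl fun i _ => flip i]
  have per_i : ∀ i : Fin d,
      (if e i = false then α i * ev α β γ (Function.update e i true) else 0)
      + (if e i = true then β i * ev α β γ (Function.update e i false) else 0)
      = (if i ∈ γ then -(if e i then α i else β i) else (if e i then β i else α i))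
          * ev α β γ e := by
    intro i
    rw [ev_update, ev_update]
    by_cases hi : i ∈ γ
    · have hev : ev α β γ e
          = (if e i then -β i else α i) * ∏ k ∈ γ.erase i, (if e k then -β k else α k) :=
        (Finset.mul_prod_erase _ _ hi).symm
      rw [if_pos hi, if_pos hi, if_pos hi, hev]
      cases hei : e i <;> simp <;> try ring
    · rw [if_neg hi, if_neg hi, if_neg hi]
      cases hei : e i <;> simp
  rw [Finset.sum_congr rfl fun i _ => per_i i, ← Finset.sum_mul, ← add_mul]
  congr 1
  have key : ∀ i : Fin d,
      (if i ∈ γ then -(if e i then α i else β i) else (if e i then β i else α i))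
      = (if e i = false then α i else 0) + (if e i = true then β i else 0)
        - (if i ∈ γ then α i + β i else 0) := by
    intro i
    by_cases hi : i ∈ γ <;> cases hei : e i <;> simp [hi] <;> ring
  rw [Finset.sum_congr rfl fun i _ => key i, Finset.sum_sub_distrib, Finset.sum_add_distrib,
    ← Finset.sum_filter, ← Finset.sum_filter, ← Finset.sum_filter, Finset.filter_mem_eq_inter,
    Finset.univ_inter]
  ring

lemma eig_pow (α β : Fin d → ℝ) (γ : Finset (Fin d)) (n : ℕ) (e : Fin d → Bool) :
    ∑ e' : Fin d → Bool, (cubeP α β ^ n) e e' * ev α β γ e'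
      = (1 - ∑ i ∈ γ, (α i + β i)) ^ n * ev α β γ e := by
  induction n generalizing e with
  | zero =>
    simp only [pow_zero, Matrix.one_apply, ite_mul, one_mul, zero_mul]
    rw [Finset.sum_ite_eq Finset.univ e, if_pos (Finset.mem_univ e)]
  | succ n ih =>
    simp only [pow_succ, Matrix.mul_apply, Finset.sum_mul]
    rw [Finset.sum_comm]
    have h1 : ∀ e'' : Fin d → Bool,
        (∑ e' : Fin d → Bool, (cubeP α β ^ n) e e'' * cubeP α β e'' e' * ev α β γ e')
        = (cubeP α β ^ n) e e'' * ((1 - ∑ i ∈ γ, (α i + β i)) * ev α β γ e'') := by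
      intro e''
      rw [← eig α β γ e'', Finset.mul_sum]
      exact Finset.sum_congr rfl fun e' _ => by ring
    rw [Finset.sum_congr rfl fun e'' _ => h1 e'']
    have h2 : (∑ e'' : Fin d → Bool,
        (cubeP α β ^ n) e e'' * ((1 - ∑ i ∈ γ, (α i + β i)) * ev α β γ e''))
        = (1 - ∑ i ∈ γ, (α i + β i)) * ∑ e'' : Fin d → Bool,
            (cubeP α β ^ n) e e'' * ev α β γ e'' := by
      rw [Finset.mul_sum]
      exact Finset.sum_congr rfl fun e'' _ => by ring
    rw [h2, ih]
    ring

lemma delta (α β : Fin d → ℝ) (e e' : Fin d → Bool) :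
    (∏ i, (α i + β i)) * (if e' = e then (1:ℝ) else 0)
      = ∑ γ ∈ (univ : Finset (Fin d)).powerset,
          ((∏ i ∈ γ, ((if e i then (-1:ℝ) else 1) * (if e' i then -β i else α i)))
            * ∏ i ∈ univ \ γ, (if e i then α i else β i)) := by
  rw [← Finset.prod_add]
  have hprod : (∏ i : Fin d, ((if e i then (-1:ℝ) else 1) * (if e' i then -β i else α i)
        + (if e i then α i else β i)))
      = ∏ i : Fin d, ((α i + β i) * (if e' i = e i then 1 else 0)) :=
    Finset.prod_congr rfl fun i _ => by
      cases hei : e i <;> cases he'i : e' i <;> simp <;> ring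
  rw [hprod, Finset.prod_mul_distrib]
  congr 1
  by_cases h : e' = e
  · subst h; simp
  · obtain ⟨i, hi⟩ := Function.ne_iff.mp h
    rw [if_neg h, Finset.prod_eq_zero (Finset.mem_univ i) (by simp [hi])]

lemma row (α β : Fin d → ℝ) (n : ℕ) (e : Fin d → Bool) :
    (cubeP α β ^ n) (fun _ => false) e * ∏ i, (α i + β i)
      = ∑ γ ∈ (univ : Finset (Fin d)).powerset,
          (1 - ∑ i ∈ γ, (α i + β i)) ^ n *
            ((∏ i ∈ γ, ((if e i then (-1:ℝ) else 1) * α i))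
              * ∏ i ∈ univ \ γ, (if e i then α i else β i)) := by
  have start : (cubeP α β ^ n) (fun _ => false) e * ∏ i, (α i + β i)
      = ∑ e' : Fin d → Bool, (cubeP α β ^ n) (fun _ => false) e'
          * ((∏ i, (α i + β i)) * (if e' = e then (1:ℝ) else 0)) := by
    rw [Finset.sum_congr rfl (fun e' _ => show _ = if e' = e then
        (cubeP α β ^ n) (fun _ => false) e' * ∏ i, (α i + β i) else 0 from by
      by_cases h : e' = e <;> simp [h])]
    rw [Finset.sum_ite_eq' Finset.univ e, if_pos (Finset.mem_univ e)]
  rw [start, Finset.sum_congr rfl fun e' _ => by rw [delta α β e e', Finset.mul_sum],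
    Finset.sum_comm]
  refine Finset.sum_congr rfl fun γ _ => ?_
  have h1 : ∀ e' : Fin d → Bool, (cubeP α β ^ n) (fun _ => false) e'
        * ((∏ i ∈ γ, ((if e i then (-1:ℝ) else 1) * (if e' i then -β i else α i)))
            * ∏ i ∈ univ \ γ, (if e i then α i else β i))
      = ((cubeP α β ^ n) (fun _ => false) e' * ev α β γ e')
        * ((∏ i ∈ γ, (if e i then (-1:ℝ) else 1)) * ∏ i ∈ univ \ γ, (if e i then α i else β i)) := by
    intro e'
    rw [Finset.prod_mul_distrib]
    unfold ev
    ring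
  rw [Finset.sum_congr rfl fun e' _ => h1 e', ← Finset.sum_mul, eig_pow]
  have ev0 : ev α β γ (fun _ => false) = ∏ i ∈ γ, α i :=
    Finset.prod_congr rfl fun i _ => by simp
  rw [ev0, Finset.prod_mul_distrib]
  ring

lemma ratio (α β : Fin d → ℝ) (hα : ∀ i, 0 < α i) (hβ : ∀ i, 0 < β i) (n : ℕ)
    (e : Fin d → Bool) :
    (cubeP α β ^ n) (fun _ => false) e
      = cubePi α β e * ∑ γ ∈ (univ : Finset (Fin d)).powerset,
          (1 - ∑ i ∈ γ, (α i + β i)) ^ n * ∏ i ∈ γ, (if e i then (-1:ℝ) else α i / β i) := by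
  have hp : ∀ i, α i + β i ≠ 0 := fun i => by have := hα i; have := hβ i; positivity
  have hP : (∏ i, (α i + β i)) ≠ 0 := Finset.prod_ne_zero_iff.mpr fun i _ => hp i
  refine mul_right_cancel₀ hP ?_
  rw [row]
  have hπ : cubePi α β e * ∏ i, (α i + β i) = ∏ i, (if e i then α i else β i) := by
    unfold cubePi
    rw [← Finset.prod_mul_distrib]
    exact Finset.prod_congr rfl fun i _ => by
      cases hei : e i <;> simp [div_mul_cancel₀ _ (hp i)]
  rw [mul_assoc, mul_comm _ (∏ i, (α i + β i)), ← mul_assoc, hπ, Finset.mul_sum]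
  refine Finset.sum_congr rfl fun γ _ => ?_
  have key : (∏ i ∈ γ, ((if e i then (-1:ℝ) else 1) * α i))
      = ∏ i ∈ γ, ((if e i then (-1:ℝ) else α i / β i) * (if e i then α i else β i)) :=
    Finset.prod_congr rfl fun i _ => by
      cases hei : e i <;> simp [div_mul_cancel₀ _ (hβ i).ne']
  rw [key, Finset.prod_mul_distrib, ← Finset.prod_sdiff (Finset.subset_univ γ)]
  ring

noncomputable def Dsum (v : Fin d → ℝ) (n : ℕ) (x : ℝ) (S : Finset (Fin d)) : ℝ :=
  ∑ T ∈ S.powerset, (-1:ℝ) ^ ((S \ T).card) * (x + ∑ i ∈ T, v i) ^ n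

lemma Dsum_zero (v : Fin d → ℝ) (x : ℝ) (S : Finset (Fin d)) :
    Dsum v 0 x S = if S = ∅ then 1 else 0 := by
  unfold Dsum
  simp only [pow_zero, mul_one]
  have h1 : (∑ T ∈ S.powerset, (-1:ℝ) ^ ((S \ T).card)) = ∑ T ∈ S.powerset, (-1:ℝ) ^ T.card :=
    Finset.sum_nbij' (fun T => S \ T) (fun T => S \ T)
      (fun T hT => Finset.mem_powerset.mpr (Finset.sdiff_subset))
      (fun T hT => Finset.mem_powerset.mpr (Finset.sdiff_subset))
      (fun T hT => by
        show S \ (S \ T) = T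
        rw [Finset.sdiff_sdiff_self_left, Finset.inter_eq_right.mpr (Finset.mem_powerset.mp hT)])
      (fun T hT => by
        show S \ (S \ T) = T
        rw [Finset.sdiff_sdiff_self_left, Finset.inter_eq_right.mpr (Finset.mem_powerset.mp hT)])
      (fun T hT => rfl)
  rw [h1]
  have h2 : (∑ T ∈ S.powerset, (-1:ℝ) ^ T.card)
      = ((∑ T ∈ S.powerset, (-1:ℤ) ^ T.card : ℤ) : ℝ) := by push_cast; rfl
  rw [h2, Finset.sum_powerset_neg_one_pow_card]
  split_ifs <;> simp

lemma Dsum_succ (v : Fin d → ℝ) (n : ℕ) (x : ℝ) (S : Finset (Fin d)) :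
    Dsum v (n+1) x S
      = x * Dsum v n x S + ∑ j ∈ S, v j * Dsum v n (x + v j) (S.erase j) := by
  unfold Dsum
  have step : ∀ T ∈ S.powerset, (-1:ℝ) ^ ((S \ T).card) * (x + ∑ i ∈ T, v i) ^ (n+1)
      = x * ((-1:ℝ) ^ ((S \ T).card) * (x + ∑ i ∈ T, v i) ^ n)
        + ∑ j ∈ T, v j * ((-1:ℝ) ^ ((S \ T).card) * (x + ∑ i ∈ T, v i) ^ n) := by
    intro T _
    rw [pow_succ, ← Finset.sum_mul]
    ring
  rw [Finset.sum_congr rfl step, Finset.sum_add_distrib, ← Finset.mul_sum]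
  congr 1
  have in1 : ∀ T ∈ S.powerset,
      (∑ j ∈ T, v j * ((-1:ℝ) ^ ((S \ T).card) * (x + ∑ i ∈ T, v i) ^ n))
      = ∑ j ∈ S, (if j ∈ T then v j * ((-1:ℝ) ^ ((S \ T).card) * (x + ∑ i ∈ T, v i) ^ n) else 0) := by
    intro T hT
    rw [Finset.sum_ite_mem, Finset.inter_eq_right.mpr (Finset.mem_powerset.mp hT)]
  rw [Finset.sum_congr rfl in1, Finset.sum_comm]
  refine Finset.sum_congr rfl fun j hj => ?_
  have in2 : (∑ T ∈ S.powerset,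
        (if j ∈ T then v j * ((-1:ℝ) ^ ((S \ T).card) * (x + ∑ i ∈ T, v i) ^ n) else 0))
      = ∑ T ∈ S.powerset.filter (fun T => j ∈ T),
          v j * ((-1:ℝ) ^ ((S \ T).card) * (x + ∑ i ∈ T, v i) ^ n) :=
    (Finset.sum_filter _ _).symm
  rw [in2, Finset.mul_sum]
  refine Finset.sum_nbij' (fun T => T.erase j) (fun T' => insert j T') ?_ ?_ ?_ ?_ ?_
  · intro T hT
    rw [Finset.mem_filter, Finset.mem_powerset] at hT
    exact Finset.mem_powerset.mpr (Finset.erase_subset_erase j hT.1)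
  · intro T' hT'
    rw [Finset.mem_powerset] at hT'
    rw [Finset.mem_filter, Finset.mem_powerset]
    have hT'S : T' ⊆ S := hT'.trans (Finset.erase_subset _ _)
    exact ⟨Finset.insert_subset hj hT'S, Finset.mem_insert_self j T'⟩
  · intro T hT
    rw [Finset.mem_filter] at hT
    exact Finset.insert_erase hT.2
  · intro T' hT'
    rw [Finset.mem_powerset] at hT'
    exact Finset.erase_insert (fun hjj => (Finset.mem_erase.mp (hT' hjj)).1 rfl)
  · intro T hT
    rw [Finset.mem_filter, Finset.mem_powerset] at hT
    have hins : insert j (T.erase j) = T := Finset.insert_erase hT.2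
    have hsd : S \ T = (S.erase j) \ (T.erase j) := by
      ext k
      simp only [Finset.mem_sdiff, Finset.mem_erase]
      constructor
      · intro ⟨hk1, hk2⟩
        exact ⟨⟨fun hkj => hk2 (hkj ▸ hT.2), hk1⟩, fun hk => hk2 hk.2⟩
      · intro ⟨⟨hkj, hk1⟩, hk2⟩
        exact ⟨hk1, fun hk => hk2 ⟨hkj, hk⟩⟩
    have hsum2 : (∑ i ∈ T, v i) = v j + ∑ i ∈ T.erase j, v i :=
      (Finset.add_sum_erase _ _ hT.2).symm
    rw [hsd, hsum2]
    ring

lemma Dsum_nonneg (v : Fin d → ℝ) (hv : ∀ i, 0 ≤ v i) :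
    ∀ (n : ℕ) (x : ℝ) (S : Finset (Fin d)), 0 ≤ x → 0 ≤ Dsum v n x S := by
  intro n
  induction n with
  | zero =>
    intro x S _
    rw [Dsum_zero]
    split_ifs <;> norm_num
  | succ n ih =>
    intro x S hx
    rw [Dsum_succ]
    refine add_nonneg (mul_nonneg hx (ih x S hx)) (Finset.sum_nonneg fun j _ => ?_)
    exact mul_nonneg (hv j) (ih _ _ (by linarith [hv j]))

lemma neg_one_pow_sdiff {s t : Finset (Fin d)} (h : s ⊆ t) :
    (-1:ℝ) ^ ((t \ s).card) = (-1:ℝ) ^ t.card * (-1:ℝ) ^ s.card := by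
  have hc : (t \ s).card + s.card = t.card := Finset.card_sdiff_add_card_eq_card h
  rw [← hc, pow_add, mul_assoc, ← pow_add, ← two_mul, pow_mul]
  norm_num

lemma Dsum_compl (v : Fin d → ℝ) (n : ℕ) (B : Finset (Fin d)) :
    Dsum v n (1 - ∑ i, v i) (univ \ B)
      = ∑ γ ∈ (univ : Finset (Fin d)).powerset,
          (if B ⊆ γ then (-1:ℝ) ^ ((γ \ B).card) * (1 - ∑ i ∈ γ, v i) ^ n else 0) := by
  rw [← Finset.sum_filter]
  unfold Dsum
  refine Finset.sum_nbij' (fun T => univ \ T) (fun γ => univ \ γ) ?_ ?_ ?_ ?_ ?_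
  · intro T hT
    rw [Finset.mem_powerset] at hT
    rw [Finset.mem_filter, Finset.mem_powerset]
    obtain ⟨-, hdisj⟩ := Finset.subset_sdiff.mp hT
    exact ⟨Finset.subset_univ _, Finset.subset_sdiff.mpr ⟨Finset.subset_univ _, hdisj.symm⟩⟩
  · intro γ hγ
    rw [Finset.mem_filter] at hγ
    exact Finset.mem_powerset.mpr (Finset.sdiff_subset_sdiff (le_refl _) hγ.2)
  · intro T hT
    show univ \ (univ \ T) = T
    rw [Finset.sdiff_sdiff_self_left, Finset.univ_inter]
  · intro γ hγ
    show univ \ (univ \ γ) = γ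
    rw [Finset.sdiff_sdiff_self_left, Finset.univ_inter]
  · intro T hT
    rw [Finset.mem_powerset] at hT
    show (-1:ℝ) ^ ((univ \ B) \ T).card * ((1 - ∑ i, v i) + ∑ i ∈ T, v i) ^ n
      = (-1:ℝ) ^ (((univ \ T) \ B).card) * (1 - ∑ i ∈ univ \ T, v i) ^ n
    have hexp : (univ \ B) \ T = (univ \ T) \ B := by
      ext k; simp only [Finset.mem_sdiff]; tauto
    have hTu : T ⊆ (univ : Finset (Fin d)) := Finset.subset_univ _
    have hbase : (1 - ∑ i ∈ (univ \ T : Finset (Fin d)), v i) = 1 - ∑ i, v i + ∑ i ∈ T, v i := by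
      have := Finset.sum_sdiff (f := v) hTu
      linarith
    rw [hexp, hbase]

lemma claimH (α β : Fin d → ℝ) (hα : ∀ i, 0 < α i) (hβ : ∀ i, 0 < β i) (n : ℕ)
    (e : Fin d → Bool) :
    (∑ γ ∈ (univ : Finset (Fin d)).powerset, (1 - ∑ i ∈ γ, (α i + β i)) ^ n
        * ∏ i ∈ γ, (if e i then (-1:ℝ) else α i / β i))
      = ∑ B ∈ (univ.filter (fun i => e i = false)).powerset,
          (∏ i ∈ B, ((α i + β i) / β i))
            * Dsum (fun i => α i + β i) n (1 - ∑ i, (α i + β i)) (univ \ B) := by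
  simp only [Dsum_compl]
  simp only [Finset.mul_sum]
  rw [Finset.sum_comm]
  refine Finset.sum_congr rfl fun γ hγ => ?_
  simp only [mul_ite, mul_zero]
  have hset : (univ.filter (fun i => e i = false)).powerset.filter (fun B => B ⊆ γ)
      = (γ.filter (fun i => e i = false)).powerset := by
    ext B
    simp only [Finset.mem_filter, Finset.mem_powerset]
    constructor
    · rintro ⟨h1, h2⟩
      intro x hx
      exact Finset.mem_filter.mpr ⟨h2 hx, (Finset.mem_filter.mp (h1 hx)).2⟩
    · intro h
      refine ⟨fun x hx => ?_, fun x hx => ?_⟩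
      · exact Finset.mem_filter.mpr ⟨Finset.mem_univ x, (Finset.mem_filter.mp (h hx)).2⟩
      · exact (Finset.mem_filter.mp (h hx)).1
  rw [← Finset.sum_filter, hset]
  set u := γ.filter (fun i => e i = false) with hu
  have husub : u ⊆ γ := Finset.filter_subset _ _
  have step1 : ∀ B ∈ u.powerset,
      (∏ i ∈ B, ((α i + β i) / β i)) * ((-1:ℝ) ^ ((γ \ B).card) * (1 - ∑ i ∈ γ, (α i + β i)) ^ n)
      = ((-1:ℝ) ^ γ.card * (1 - ∑ i ∈ γ, (α i + β i)) ^ n) * ∏ i ∈ B, (-((α i + β i) / β i)) := by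
    intro B hB
    rw [neg_one_pow_sdiff ((Finset.mem_powerset.mp hB).trans husub)]
    have : (∏ i ∈ B, (-((α i + β i) / β i)))
        = (-1:ℝ) ^ B.card * ∏ i ∈ B, ((α i + β i) / β i) := by
      rw [← Finset.prod_const, ← Finset.prod_mul_distrib]
      exact Finset.prod_congr rfl fun i _ => by ring
    rw [this]
    ring
  rw [Finset.sum_congr rfl step1, ← Finset.mul_sum]
  have step2 : (∑ B ∈ u.powerset, ∏ i ∈ B, (-((α i + β i) / β i)))
      = ∏ i ∈ u, (-((α i + β i) / β i) + 1) := by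
    rw [Finset.prod_add]
    exact Finset.sum_congr rfl fun B hB => by rw [Finset.prod_const_one, mul_one]
  rw [step2]
  have step3 : ∀ i ∈ u, (-((α i + β i) / β i) + 1) = -(α i / β i) := by
    intro i _
    have hb : β i ≠ 0 := (hβ i).ne'
    field_simp
    ring
  rw [Finset.prod_congr rfl step3]
  have lhsplit : (∏ i ∈ γ, (if e i then (-1:ℝ) else α i / β i))
      = (∏ i ∈ γ.filter (fun i => e i = true), (-1:ℝ)) * ∏ i ∈ γ.filter (fun i => ¬ (e i = true)), (α i / β i) :=
    Finset.prod_ite _ _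
  have hufilt : γ.filter (fun i => ¬ (e i = true)) = u := by
    rw [hu]
    exact Finset.filter_congr fun i _ => by simp [Bool.not_eq_true]
  have hneg : (∏ i ∈ u, (-(α i / β i))) = (-1:ℝ) ^ u.card * ∏ i ∈ u, (α i / β i) := by
    rw [← Finset.prod_const, ← Finset.prod_mul_distrib]
    exact Finset.prod_congr rfl fun i _ => by ring
  rw [hneg, lhsplit, hufilt, Finset.prod_const]
  have hcard : (γ.filter (fun i => e i = true)).card + u.card = γ.card := by
    rw [← hufilt]
    exact Finset.card_filter_add_card_filter_not (s := γ) (p := fun i => e i = true)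
  have hsign : (-1:ℝ) ^ γ.card * (-1:ℝ) ^ u.card = (-1:ℝ) ^ (γ.filter (fun i => e i = true)).card := by
    rw [← hcard, pow_add, mul_assoc, ← pow_add, ← two_mul, pow_mul]
    norm_num
  rw [← hsign]
  ring

end Stmt16Aux

open Stmt16Aux


/-- for the cube walk with `Σ α_i + Σ β_i ≤ 1`, the separation
distance from stationarity after `n ≥ 1` steps started at the minimal state
`(0,…,0)` equals `Σ_{k=1}^d (−1)^{k−1} Σ_{|γ|=k} (1 − s_γ)ⁿ`, where
`s_γ = Σ_{i∈γ} (α_i + β_i)`. -/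
theorem stmt16 {d : ℕ} (α β : Fin d → ℝ)
    (hα : ∀ i, 0 < α i) (hβ : ∀ i, 0 < β i)
    (hsum : (∑ i, α i) + (∑ i, β i) ≤ 1) :
    ∀ n : ℕ, 1 ≤ n →
      (univ.sup' univ_nonempty fun e : Fin d → Bool =>
          1 - (cubeP α β ^ n) (fun _ => false) e / cubePi α β e)
        = ∑ k ∈ Finset.Icc 1 d, (-1 : ℝ) ^ (k - 1) *
            ∑ γ ∈ Finset.powersetCard k (univ : Finset (Fin d)),
              (1 - ∑ i ∈ γ, (α i + β i)) ^ n := by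
  intro n _
  have hπpos : ∀ e : Fin d → Bool, 0 < cubePi α β e := by
    intro e
    refine Finset.prod_pos fun i _ => ?_
    have h1 := hα i; have h2 := hβ i
    cases e i <;> simp <;> positivity
  set R : (Fin d → Bool) → ℝ := fun e => ∑ γ ∈ (univ : Finset (Fin d)).powerset,
      (1 - ∑ i ∈ γ, (α i + β i)) ^ n * ∏ i ∈ γ, (if e i then (-1:ℝ) else α i / β i) with hR
  have hdiv : ∀ e, (cubeP α β ^ n) (fun _ => false) e / cubePi α β e = R e := by
    intro e
    rw [ratio α β hα hβ n e, mul_div_cancel_left₀ _ (hπpos e).ne']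
  have hq : 0 ≤ 1 - ∑ i, (α i + β i) := by
    have h : (∑ i, (α i + β i)) = (∑ i, α i) + ∑ i, β i := Finset.sum_add_distrib
    linarith
  have hWnonneg : ∀ B : Finset (Fin d),
      0 ≤ Dsum (fun i => α i + β i) n (1 - ∑ i, (α i + β i)) (univ \ B) :=
    fun B => Dsum_nonneg _ (fun i => by have := hα i; have := hβ i; linarith) n _ _ hq
  have htrue : R (fun _ => true) = Dsum (fun i => α i + β i) n (1 - ∑ i, (α i + β i)) univ := by
    rw [hR]
    beta_reduce
    rw [claimH α β hα hβ n (fun _ => true)]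
    have h1 : (univ.filter (fun i => (fun _ : Fin d => true) i = false)) = (∅ : Finset (Fin d)) := by
      simp
    rw [h1]
    simp
  have hmin : ∀ e, R (fun _ => true) ≤ R e := by
    intro e
    rw [htrue, hR]
    beta_reduce
    rw [claimH α β hα hβ n e]
    have h0 : (∅ : Finset (Fin d)) ∈ (univ.filter (fun i => e i = false)).powerset :=
      Finset.mem_powerset.mpr (Finset.empty_subset _)
    refine le_trans (le_of_eq ?_) (Finset.single_le_sum (fun B _ => ?_) h0)
    · simp
    · refine mul_nonneg (Finset.prod_nonneg fun i _ => ?_) (hWnonneg B)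
      have := hα i; have := hβ i
      positivity
  have hsup : (univ.sup' univ_nonempty fun e : Fin d → Bool =>
      1 - (cubeP α β ^ n) (fun _ => false) e / cubePi α β e) = 1 - R (fun _ => true) := by
    apply le_antisymm
    · refine Finset.sup'_le _ _ fun e _ => ?_
      rw [hdiv e]
      linarith [hmin e]
    · have h := Finset.le_sup' (f := fun e : Fin d → Bool =>
        1 - (cubeP α β ^ n) (fun _ => false) e / cubePi α β e)
        (Finset.mem_univ (fun _ : Fin d => true))
      rw [hdiv (fun _ => true)] at h
      exact h
  rw [hsup]
  have hRtrue : R (fun _ => true) = ∑ γ ∈ (univ : Finset (Fin d)).powerset,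
      (-1:ℝ) ^ γ.card * (1 - ∑ i ∈ γ, (α i + β i)) ^ n := by
    rw [hR]
    beta_reduce
    refine Finset.sum_congr rfl fun γ _ => ?_
    rw [Finset.prod_congr rfl (fun i _ => if_pos rfl), Finset.prod_const]
    ring
  rw [hRtrue, Finset.sum_powerset]
  have hrange : Finset.range ((univ : Finset (Fin d)).card + 1) = insert 0 (Finset.Icc 1 d) := by
    ext k
    simp only [Finset.mem_range, Finset.mem_insert, Finset.mem_Icc, Finset.card_univ,
      Fintype.card_fin]
    omega
  rw [hrange, Finset.sum_insert (by simp)]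
  have h0 : (∑ γ ∈ Finset.powersetCard 0 (univ : Finset (Fin d)),
      (-1:ℝ) ^ γ.card * (1 - ∑ i ∈ γ, (α i + β i)) ^ n) = 1 := by
    rw [Finset.powersetCard_zero, Finset.sum_singleton]
    simp
  rw [h0]
  have hmain : (∑ k ∈ Finset.Icc 1 d, (-1:ℝ) ^ (k - 1) *
      ∑ γ ∈ Finset.powersetCard k (univ : Finset (Fin d)), (1 - ∑ i ∈ γ, (α i + β i)) ^ n)
      = -∑ k ∈ Finset.Icc 1 d, ∑ γ ∈ Finset.powersetCard k (univ : Finset (Fin d)),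
          (-1:ℝ) ^ γ.card * (1 - ∑ i ∈ γ, (α i + β i)) ^ n := by
    rw [← Finset.sum_neg_distrib]
    refine Finset.sum_congr rfl fun k hk => ?_
    obtain ⟨m, rfl⟩ : ∃ m, k = m + 1 := ⟨k - 1, by have := (Finset.mem_Icc.mp hk).1; omega⟩
    have hin : ∀ γ ∈ Finset.powersetCard (m+1) (univ : Finset (Fin d)),
        (-1:ℝ) ^ γ.card * (1 - ∑ i ∈ γ, (α i + β i)) ^ n
        = (-1:ℝ) ^ (m+1) * (1 - ∑ i ∈ γ, (α i + β i)) ^ n := by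
      intro γ hγ
      rw [(Finset.mem_powersetCard.mp hγ).2]
    rw [Finset.sum_congr rfl hin, ← Finset.mul_sum]
    simp only [Nat.add_sub_cancel, pow_succ]
    ring
  rw [hmain]
  ring
end

section
/- For the random walk on the d-dimensional cube E = {0,1}^d with parameters α_i, β_i > 0 and Σ_{i=1}^d α_i + Σ_{i=1}^d β_i ≤ 1 (transitions P(e, e+s_i) = α_i when e_i = 0, P(e, e−s_i) = β_i when e_i = 1, P(e,e) = 1 − Σ_{i: e_i=0} α_i − Σ_{i: e_i=1} β_i, all other entries 0), the 2^d eigenvalues of P are exactly {1 − s_γ : γ ⊆ {1,…,d}}, where s_γ = Σ_{i∈γ}(α_i + β_i); equivalently, the characteristic polynomial of P equals Π_{γ ⊆ {1,…,d}} (X − (1 − s_γ)). -/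
open Finset Matrix

section aux
open Polynomial
variable {n : Type*} [Fintype n] [DecidableEq n]

lemma charpoly_eq_of_conj (P U V D : Matrix n n ℝ) (hVU : V * U = 1)
    (hPU : P * U = U * D) : P.charpoly = D.charpoly := by
  have hUV : U * V = 1 := mul_eq_one_comm.mp hVU
  have hP : P = U * D * V := by
    calc P = P * (U * V) := by rw [hUV, mul_one]
    _ = (P * U) * V := by rw [mul_assoc]
    _ = U * D * V := by rw [hPU]
  have hmap : ∀ A B : Matrix n n ℝ, (C : ℝ →+* ℝ[X]).mapMatrix (A * B) =
      (C : ℝ →+* ℝ[X]).mapMatrix A * (C : ℝ →+* ℝ[X]).mapMatrix B := fun A B => map_mul _ A B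
  set U' := (C : ℝ →+* ℝ[X]).mapMatrix U with hU'
  set V' := (C : ℝ →+* ℝ[X]).mapMatrix V with hV'
  have hUV' : U' * V' = 1 := by rw [hU', hV', ← hmap, hUV, _root_.map_one]
  have hchar : charmatrix P = U' * charmatrix D * V' := by
    rw [charmatrix, charmatrix, hP, hmap, hmap, mul_sub, sub_mul]
    congr 1
    have hcomm : U' * Matrix.scalar n (X : ℝ[X]) = Matrix.scalar n (X : ℝ[X]) * U' :=
      (Matrix.scalar_commute (X : ℝ[X]) (fun r => Commute.all _ _) U').symm
    rw [hcomm, mul_assoc, hUV', mul_one]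
  rw [Matrix.charpoly, Matrix.charpoly, hchar, det_mul, det_mul]
  have : U'.det * V'.det = 1 := by rw [← det_mul, hUV', det_one]
  ring_nf
  rw [mul_comm U'.det, mul_assoc, this, mul_one]

lemma charpoly_diagonal (v : n → ℝ) :
    (Matrix.diagonal v).charpoly = ∏ i, (X - C (v i)) := by
  have : charmatrix (Matrix.diagonal v) = Matrix.diagonal fun i => (X : ℝ[X]) - C (v i) := by
    ext i j
    by_cases h : i = j
    · subst h; simp [charmatrix_apply_eq]
    · simp [charmatrix_apply_ne _ _ _ h, Matrix.diagonal_apply_ne _ h]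
  rw [Matrix.charpoly, this, det_diagonal]
end aux

noncomputable def cubeU {d : ℕ} (α β : Fin d → ℝ) :
    Matrix (Fin d → Bool) (Fin d → Bool) ℝ :=
  Matrix.of fun e η => ∏ i, cond (η i) (cond (e i) (-β i) (α i)) 1

noncomputable def cubeV {d : ℕ} (α β : Fin d → ℝ) :
    Matrix (Fin d → Bool) (Fin d → Bool) ℝ :=
  Matrix.of fun η e =>
    ∏ i, cond (η i) (cond (e i) (-1) 1 / (α i + β i)) (cond (e i) (α i) (β i) / (α i + β i))

noncomputable def cubeD {d : ℕ} (α β : Fin d → ℝ) :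
    Matrix (Fin d → Bool) (Fin d → Bool) ℝ :=
  Matrix.diagonal fun η => 1 - ∑ i, cond (η i) (α i + β i) 0

lemma cubeVU {d : ℕ} (α β : Fin d → ℝ) (hα : ∀ i, 0 < α i) (hβ : ∀ i, 0 < β i) :
    cubeV α β * cubeU α β = 1 := by
  ext η η'
  rw [Matrix.mul_apply]
  have h1 : ∀ e : Fin d → Bool, cubeV α β η e * cubeU α β e η' =
      ∏ i, (cond (η i) (cond (e i) (-1) 1 / (α i + β i)) (cond (e i) (α i) (β i) / (α i + β i))
        * cond (η' i) (cond (e i) (-β i) (α i)) 1) := by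
    intro e; rw [cubeV, cubeU, Matrix.of_apply, Matrix.of_apply, ← Finset.prod_mul_distrib]
  rw [Finset.sum_congr rfl fun e _ => h1 e]
  rw [← Fintype.piFinset_univ,
    (Finset.prod_univ_sum (fun _ : Fin d => (univ : Finset Bool))
      (fun i b => cond (η i) (cond b (-1) 1 / (α i + β i)) (cond b (α i) (β i) / (α i + β i))
        * cond (η' i) (cond b (-β i) (α i)) 1)).symm]
  have h2 : ∀ i, (∑ b : Bool,
      (cond (η i) (cond b (-1) 1 / (α i + β i)) (cond b (α i) (β i) / (α i + β i))
        * cond (η' i) (cond b (-β i) (α i)) 1)) = if η i = η' i then 1 else 0 := by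
    intro i
    have hs : α i + β i ≠ 0 := ne_of_gt (add_pos (hα i) (hβ i))
    rw [Fintype.sum_bool]
    cases hi : η i <;> cases hi' : η' i <;> simp <;> field_simp <;> ring
  rw [Finset.prod_congr rfl fun i _ => h2 i, Finset.prod_boole, Matrix.one_apply]
  congr 1
  simp [funext_iff, eq_iff_iff]

lemma cubePU {d : ℕ} (α β : Fin d → ℝ) :
    cubeP α β * cubeU α β = cubeU α β * cubeD α β := by
  ext e η
  rw [Matrix.mul_apply, cubeD, Matrix.mul_diagonal]
  set f : Fin d → Bool → ℝ := fun i b => cond (η i) (cond b (-β i) (α i)) 1 with hf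
  have hU : ∀ e' : Fin d → Bool, cubeU α β e' η = ∏ i, f i (e' i) := fun _ => rfl
  -- auxiliary: sums of conjunction-indicators
  have haux : ∀ (P : Prop) [Decidable P] (c : Fin d → Bool) (a : ℝ),
      (∑ e' : Fin d → Bool, (if P ∧ e' = c then a else 0) * cubeU α β e' η) =
        if P then a * cubeU α β c η else 0 := by
    intro P _ c a
    by_cases hP : P <;> simp [hP, ite_and, ite_mul, Finset.sum_ite_eq']
  have expand : (∑ e', cubeP α β e e' * cubeU α β e' η) =
      (1 - (∑ i ∈ univ.filter (fun i => e i = false), α i)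
         - (∑ i ∈ univ.filter (fun i => e i = true), β i)) * cubeU α β e η
      + ∑ i, ((if e i = false then α i * cubeU α β (Function.update e i true) η else 0)
            + (if e i = true then β i * cubeU α β (Function.update e i false) η else 0)) := by
    have : ∀ e', cubeP α β e e' * cubeU α β e' η =
        (if e' = e then
            (1 - (∑ i ∈ univ.filter (fun i => e i = false), α i)
              - (∑ i ∈ univ.filter (fun i => e i = true), β i)) else 0) * cubeU α β e' η
        + ∑ i, ((if e i = false ∧ e' = Function.update e i true then α i else 0) * cubeU α β e' η
              + (if e i = true ∧ e' = Function.update e i false then β i else 0) * cubeU α β e' η) := by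
      intro e'
      rw [cubeP, Matrix.of_apply, add_mul, Finset.sum_mul]
      congr 1
      exact Finset.sum_congr rfl fun i _ => add_mul _ _ _
    rw [Finset.sum_congr rfl fun e' _ => this e', Finset.sum_add_distrib]
    congr 1
    · simp [ite_mul, Finset.sum_ite_eq']
    · rw [Finset.sum_comm]
      refine Finset.sum_congr rfl fun i _ => ?_
      rw [Finset.sum_add_distrib, haux, haux]
  rw [expand]
  have hWerase : ∀ (i : Fin d) (b : Bool), cubeU α β (Function.update e i b) η
      = f i b * ∏ j ∈ univ.erase i, f j (e j) := by
    intro i b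
    rw [hU, ← Finset.mul_prod_erase univ _ (Finset.mem_univ i), Function.update_self]
    congr 1
    exact Finset.prod_congr rfl fun j hj => by
      rw [Function.update_of_ne (Finset.ne_of_mem_erase hj)]
  have hWe : ∀ i : Fin d, cubeU α β e η = f i (e i) * ∏ j ∈ univ.erase i, f j (e j) :=
    fun i => (Finset.mul_prod_erase univ (fun j => f j (e j)) (Finset.mem_univ i)).symm
  have hterm : ∀ i : Fin d,
      ((if e i = false then α i * cubeU α β (Function.update e i true) η else 0)
        + (if e i = true then β i * cubeU α β (Function.update e i false) η else 0))
      = (cond (e i) (β i) (α i) - cond (η i) (α i + β i) 0) * cubeU α β e η := by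
    intro i
    rw [hWerase i true, hWerase i false, hWe i]
    cases he : e i <;> cases hη : η i <;> simp [hf, he, hη] <;> ring
  rw [Finset.sum_congr rfl fun i _ => hterm i, ← Finset.sum_mul]
  have hsum1 : (∑ i, (cond (e i) (β i) (α i) - cond (η i) (α i + β i) 0))
      = ((∑ i ∈ univ.filter (fun i => e i = false), α i)
        + (∑ i ∈ univ.filter (fun i => e i = true), β i))
        - ∑ i, cond (η i) (α i + β i) 0 := by
    rw [Finset.sum_sub_distrib]
    congr 1
    rw [Finset.sum_filter, Finset.sum_filter, ← Finset.sum_add_distrib]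
    exact Finset.sum_congr rfl fun i _ => by cases e i <;> simp
  rw [hsum1]
  ring


/-- the characteristic polynomial of the cube walk equals
`Π_{γ ⊆ {1,…,d}} (X − (1 − s_γ))` with `s_γ = Σ_{i∈γ}(α_i + β_i)`; i.e. the
`2^d` eigenvalues of `P` are exactly the numbers `1 − s_γ`. -/
theorem stmt17 {d : ℕ} (α β : Fin d → ℝ)
    (hα : ∀ i, 0 < α i) (hβ : ∀ i, 0 < β i)
    (hsum : (∑ i, α i) + (∑ i, β i) ≤ 1) :
    (cubeP α β).charpoly =
      ∏ γ ∈ (univ : Finset (Fin d)).powerset,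
        (Polynomial.X - Polynomial.C (1 - ∑ i ∈ γ, (α i + β i))) := by
  rw [charpoly_eq_of_conj (cubeP α β) (cubeU α β) (cubeV α β) (cubeD α β)
    (cubeVU α β hα hβ) (cubePU α β), cubeD, _root_.charpoly_diagonal, Finset.powerset_univ]
  exact Fintype.prod_equiv
    { toFun := fun η => univ.filter fun i => η i = true
      invFun := fun γ i => decide (i ∈ γ)
      left_inv := fun η => by funext i; simp
      right_inv := fun γ => by ext i; simp } _ _
    (fun η => by simp [Finset.sum_filter, Bool.cond_eq_ite])
end
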